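/- arXiv:2201.05783 — 2 statements merged into one kernel-verified Lean document; each statement's English description precedes it below -/
import Mathlib

section
/- Let (T,χ) be a lenient tree decomposition of a graph G and let K be a set of vertices inducing a clique in G. Then there exist two adjacent nodes t,t′ of T (or a single node) such that K ⊆ χ(t) ∪ χ(t′). -/
open SimpleGraph

section Defs

variable {V W : Type}

/-- `X` covers the family `B`: every member of `B` meets `X`. -/
def Covers (X : Set V) (B : Set (Set V)) : Prop := ∀ S ∈ B, (S ∩ X).Nonempty

/-- A strict bramble: a family of connected vertex sets, pairwise intersecting. -/
def IsStrictBramble (G : SimpleGraph V) (B : Set (Set V)) : Prop :=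
  (∀ S ∈ B, (G.induce S).Connected) ∧ ∀ S ∈ B, ∀ S' ∈ B, (S ∩ S').Nonempty

/-- Two vertex sets touch: they intersect or are joined by an edge. -/
def Touches (G : SimpleGraph V) (S S' : Set V) : Prop :=
  (S ∩ S').Nonempty ∨ ∃ u ∈ S, ∃ v ∈ S', G.Adj u v

/-- A bramble: a family of connected vertex sets, pairwise touching. -/
def IsBramble (G : SimpleGraph V) (B : Set (Set V)) : Prop :=
  (∀ S ∈ B, (G.induce S).Connected) ∧ ∀ S ∈ B, ∀ S' ∈ B, Touches G S S'

/-- The order of a family of vertex sets: minimum size of a covering set. -/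
noncomputable def brOrder (B : Set (Set V)) : ℕ :=
  sInf {n | ∃ X : Set V, Covers X B ∧ X.ncard = n}

/-- The strict bramble number. -/
noncomputable def sbn (G : SimpleGraph V) : ℕ :=
  sSup {n | ∃ B, IsStrictBramble G B ∧ brOrder B = n}

/-- The bramble number. -/
noncomputable def bn (G : SimpleGraph V) : ℕ :=
  sSup {n | ∃ B, IsBramble G B ∧ brOrder B = n}

/-- `S` is an `(x,y)`-separator: `x, y ∉ S` and `x, y` lie in different
components of `G − S`. -/
def SepPair (G : SimpleGraph V) (x y : V) (S : Set V) : Prop :=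
  x ∉ S ∧ y ∉ S ∧ ∀ (hx : x ∈ Sᶜ) (hy : y ∈ Sᶜ),
    ¬ (G.induce Sᶜ).Reachable ⟨x, hx⟩ ⟨y, hy⟩

/-- `S` is an `(X,Y)`-separator of `G`. -/
def IsSetSeparator (G : SimpleGraph V) (X Y S : Set V) : Prop :=
  ∀ x ∈ X \ S, ∀ y ∈ Y \ S, SepPair G x y S

/-- A lenient tree decomposition of `G`. -/
structure LenientTD (G : SimpleGraph V) where
  ι : Type
  T : SimpleGraph ι
  tree : T.IsTree
  χ : ι → Set V
  covers : ∀ v : V, ∃ t, v ∈ χ t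
  edge_mem : ∀ u v : V, G.Adj u v →
    ∃ t t', (t = t' ∨ T.Adj t t') ∧ u ∈ χ t ∪ χ t' ∧ v ∈ χ t ∪ χ t'
  trace_conn : ∀ v : V, (T.induce {t | v ∈ χ t}).Connected

/-- The width of a lenient tree decomposition is at most `k`. -/
def LenientTD.WidthLE {G : SimpleGraph V} (D : LenientTD G) (k : ℕ) : Prop :=
  ∀ t, (D.χ t).ncard ≤ k

/-- An ordinary tree decomposition of `G`. -/
structure TreeDecomp (G : SimpleGraph V) where
  ι : Type
  T : SimpleGraph ι
  tree : T.IsTree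
  χ : ι → Set V
  covers : ∀ v : V, ∃ t, v ∈ χ t
  edge_mem : ∀ u v : V, G.Adj u v → ∃ t, u ∈ χ t ∧ v ∈ χ t
  trace_conn : ∀ v : V, (T.induce {t | v ∈ χ t}).Connected

/-- Treewidth: minimum over tree decompositions of (max bag size − 1). -/
noncomputable def tw (G : SimpleGraph V) : ℕ :=
  sInf {k | ∃ D : TreeDecomp G, ∀ t, (D.χ t).ncard ≤ k + 1}

/-- A minor model of `H` in `G`. -/
def IsMinorModel (H : SimpleGraph W) (G : SimpleGraph V) (μ : W → Set V) : Prop :=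
  (∀ w, (G.induce (μ w)).Connected) ∧
  (∀ w w', w ≠ w' → μ w ∩ μ w' = ∅) ∧
  (∀ w w', H.Adj w w' → ∃ u ∈ μ w, ∃ v ∈ μ w', G.Adj u v)

/-- `H` is a minor of `G`. -/
def IsMinorOf (H : SimpleGraph W) (G : SimpleGraph V) : Prop :=
  ∃ μ : W → Set V, IsMinorModel H G μ

/-- The lexicographic product `T · K_k`. -/
def lexK {ι : Type} (T : SimpleGraph ι) (k : ℕ) : SimpleGraph (ι × Fin k) where
  Adj a b := T.Adj a.1 b.1 ∨ (a.1 = b.1 ∧ a.2 ≠ b.2)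
  symm := ⟨by
    rintro a b (h | ⟨h1, h2⟩)
    · exact Or.inl h.symm
    · exact Or.inr ⟨h1.symm, h2.symm⟩⟩
  loopless := ⟨by
    rintro a (h | ⟨_, h2⟩)
    · exact T.irrefl h
    · exact h2 rfl⟩

/-- The lexicographic tree product number. -/
noncomputable def ltp (G : SimpleGraph V) : ℕ :=
  sInf {m | ∃ (ι : Type) (T : SimpleGraph ι), T.IsTree ∧ IsMinorOf G (lexK T m)}

/-- The `(T,χ)`-completion of `G`: make each union of two close bags a clique. -/
def LenientTD.completion {G : SimpleGraph V} (D : LenientTD G) : SimpleGraph V where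
  Adj u v := u ≠ v ∧ ∃ t t', (t = t' ∨ D.T.Adj t t') ∧
    u ∈ D.χ t ∪ D.χ t' ∧ v ∈ D.χ t ∪ D.χ t'
  symm := ⟨by
    rintro u v ⟨hne, t, t', hc, hu, hv⟩
    exact ⟨hne.symm, t, t', hc, hv, hu⟩⟩
  loopless := ⟨fun u h => h.1 rfl⟩

/-- `G` is chordal: every cycle of length at least four has a chord. -/
def IsChordal (G : SimpleGraph V) : Prop :=
  ∀ (v : V) (w : G.Walk v v), w.IsCycle → 4 ≤ w.length →
    ∃ x ∈ w.support, ∃ y ∈ w.support, G.Adj x y ∧ s(x, y) ∉ w.edges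

end Defs
namespace CliqueBags

variable {ι : Type} {T : SimpleGraph ι}

noncomputable def getPath (hT : T.IsTree) (u v : ι) : T.Walk u v :=
  (hT.existsUnique_path u v).choose

lemma getPath_isPath (hT : T.IsTree) (u v : ι) : (getPath hT u v).IsPath :=
  (hT.existsUnique_path u v).choose_spec.1

lemma getPath_unique (hT : T.IsTree) {u v : ι} (p : T.Walk u v) (hp : p.IsPath) :
    p = getPath hT u v :=
  (hT.existsUnique_path u v).choose_spec.2 p hp

lemma isPath_append {G : SimpleGraph ι} {u m v : ι} {p : G.Walk u m} {q : G.Walk m v}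
    (hp : p.IsPath) (hq : q.IsPath) (h : ∀ x, x ∈ p.support → x ∈ q.support → x = m) :
    (p.append q).IsPath := by
  rw [Walk.isPath_def, Walk.support_append]
  refine List.Nodup.append hp.support_nodup (hq.support_nodup.tail) ?_
  intro x hxp hxq
  have hx : x ∈ q.support := List.mem_of_mem_tail hxq
  have hxm := h x hxp hx
  subst hxm
  have hnd := hq.support_nodup
  rw [Walk.support_eq_cons] at hnd
  exact (List.nodup_cons.mp hnd).1 hxq

lemma exists_last {G : SimpleGraph ι} {a c : ι} (r : G.Walk a c) (P : Set ι)
    (h : ∃ x ∈ r.support, x ∈ P) :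
    ∃ (m : ι) (r2 : G.Walk m c), (r.IsPath → r2.IsPath) ∧ m ∈ P ∧
      (∀ x ∈ r2.support, x ∈ r.support) ∧ (∀ x ∈ r2.support, x ∈ P → x = m) := by
  induction r with
  | nil =>
    obtain ⟨x, hx, hxP⟩ := h
    simp only [Walk.support_nil, List.mem_singleton] at hx
    subst hx
    exact ⟨x, Walk.nil, fun h => h, hxP, fun y hy => hy, fun y hy _ => by
      simpa using hy⟩
  | cons h' q ih =>
    by_cases hq : ∃ x ∈ q.support, x ∈ P
    · obtain ⟨m, r2, h1, h2, h3, h4⟩ := ih hq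
      exact ⟨m, r2, fun hp => h1 hp.of_cons, h2,
        fun x hx => by
          rw [Walk.support_cons]
          exact List.mem_cons_of_mem _ (h3 x hx), h4⟩
    · obtain ⟨x, hx, hxP⟩ := h
      rw [Walk.support_cons, List.mem_cons] at hx
      have hxa := hx.resolve_right (fun hc => hq ⟨x, hc, hxP⟩)
      subst hxa
      refine ⟨x, Walk.cons h' q, id, hxP, fun y hy => hy, ?_⟩
      intro y hy hyP
      rw [Walk.support_cons, List.mem_cons] at hy
      exact hy.resolve_right (fun hc => hq ⟨y, hc, hyP⟩)

lemma median (hT : T.IsTree) (a b c : ι) :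
    ∃ m, m ∈ (getPath hT a b).support ∧ m ∈ (getPath hT b c).support ∧
      m ∈ (getPath hT a c).support := by
  classical
  set p := getPath hT a b with hp
  set r := getPath hT a c with hr
  obtain ⟨m, r2, h1, h2, h3, h4⟩ := exists_last r {x | x ∈ p.support}
      ⟨a, r.start_mem_support, p.start_mem_support⟩
  have hr2 : r2.IsPath := h1 (getPath_isPath hT a c)
  have hmp : m ∈ p.support := h2
  set p2 := p.dropUntil m hmp with hp2def
  have hp2 : p2.IsPath := (getPath_isPath hT a b).dropUntil hmp
  have hw : (p2.reverse.append r2).IsPath := by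
    apply isPath_append hp2.reverse hr2
    intro x hxp hxr
    refine h4 x hxr ?_
    rw [Walk.support_reverse, List.mem_reverse] at hxp
    exact Walk.support_dropUntil_subset p hmp hxp
  have heq := getPath_unique hT _ hw
  refine ⟨m, hmp, ?_, h3 m r2.start_mem_support⟩
  rw [← heq, Walk.mem_support_append_iff]
  exact Or.inr r2.start_mem_support

/-- Path-closedness: the subtree property. -/
def PathClosed (hT : T.IsTree) (S : Set ι) : Prop :=
  ∀ u ∈ S, ∀ v ∈ S, ∀ x ∈ (getPath hT u v).support, x ∈ S

lemma pathClosed_of_connected (hT : T.IsTree) {S : Set ι}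
    (hc : (T.induce S).Connected) : PathClosed hT S := by
  classical
  intro u hu v hv x hx
  rw [connected_induce_iff, Subgraph.connected_iff_forall_exists_walk_subgraph] at hc
  obtain ⟨w, hw⟩ := hc.2 (u := u) (v := v) hu hv
  have hsup : ∀ y ∈ w.support, y ∈ S := by
    intro y hy
    have h1 : y ∈ w.toSubgraph.verts := (w.mem_verts_toSubgraph).mpr hy
    have h2 := Subgraph.verts_mono hw h1
    simpa using h2
  have heq := getPath_unique hT w.bypass w.bypass_isPath
  rw [← heq] at hx
  exact hsup x (w.support_bypass_subset hx)

lemma induce_singleton_connected (G : SimpleGraph ι) (v : ι) :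
    (G.induce ({v} : Set ι)).Connected := by
  haveI : Nonempty ({v} : Set ι) := ⟨⟨v, Set.mem_singleton v⟩⟩
  constructor
  · rintro ⟨a, ha⟩ ⟨b, hb⟩
    have hab : a = b := by
      simp only [Set.mem_singleton_iff] at ha hb
      rw [ha, hb]
    have : (⟨a, ha⟩ : {x // x ∈ ({v} : Set ι)}) = ⟨b, hb⟩ := Subtype.ext hab
    rw [this]

lemma inflate_connected {S : Set ι} (hne : S.Nonempty) (hc : (T.induce S).Connected) :
    (T.induce (S ∪ {y | ∃ s ∈ S, T.Adj s y})).Connected := by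
  obtain ⟨u, hu⟩ := hne
  apply T.induce_connected_of_patches u (Or.inl hu)
  intro v hv
  rcases hv with hv | ⟨s, hs, hsv⟩
  · exact ⟨S, Set.subset_union_left, hu, hv, hc.preconnected _ _⟩
  · refine ⟨S ∪ {v}, ?_, Or.inl hu, Or.inr rfl, ?_⟩
    · rintro y (hy | rfl)
      · exact Or.inl hy
      · exact Or.inr ⟨s, hs, hsv⟩
    · exact (connected_induce_union hc.preconnected (induce_singleton_connected T v).preconnected hs
        (Set.mem_singleton v) hsv).preconnected _ _

lemma three_helly (hT : T.IsTree) {A B C : Set ι}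
    (hA : PathClosed hT A) (hB : PathClosed hT B) (hC : PathClosed hT C)
    (hAB : (A ∩ B).Nonempty) (hBC : (B ∩ C).Nonempty) (hAC : (A ∩ C).Nonempty) :
    (A ∩ B ∩ C).Nonempty := by
  obtain ⟨x, hxA, hxB⟩ := hAB
  obtain ⟨y, hyB, hyC⟩ := hBC
  obtain ⟨z, hzA, hzC⟩ := hAC
  obtain ⟨m, h1, h2, h3⟩ := median hT x y z
  exact ⟨m, ⟨hA x hxA z hzA m h3, hB x hxB y hyB m h1⟩, hC y hyC z hzC m h2⟩

lemma helly (hT : T.IsTree) {α : Type} :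
    ∀ (n : ℕ) (F : Finset α) (f : α → Set ι), F.card = n →
    (∀ x ∈ F, (f x).Nonempty) → (∀ x ∈ F, PathClosed hT (f x)) →
    (∀ x ∈ F, ∀ y ∈ F, (f x ∩ f y).Nonempty) →
    ∃ t, ∀ x ∈ F, t ∈ f x := by
  intro n
  induction n with
  | zero =>
    intro F f hcard _ _ _
    have hF : F = ∅ := Finset.card_eq_zero.mp hcard
    subst hF
    exact ⟨hT.isConnected.nonempty.some, by simp⟩
  | succ n ih =>
    intro F f hcard hne hcl hpair
    obtain ⟨a, ha⟩ : F.Nonempty := Finset.card_pos.mp (by omega)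
    classical
    set F' := F.erase a with hF'def
    have hF'card : F'.card = n := by
      rw [hF'def, Finset.card_erase_of_mem ha, hcard]
      omega
    rcases F'.eq_empty_or_nonempty with hF' | ⟨b, hb⟩
    · obtain ⟨t, ht⟩ := hne a ha
      refine ⟨t, fun x hx => ?_⟩
      have hxa : x = a := by
        by_contra hxa
        have : x ∈ F' := Finset.mem_erase.mpr ⟨hxa, hx⟩
        simp [hF'] at this
      subst hxa; exact ht
    · obtain ⟨t, ht⟩ := ih F' (fun x => f x ∩ f a) hF'card
        (fun x hx => hpair x (Finset.mem_of_mem_erase hx) a ha)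
        (fun x hx u hu v hv y hy =>
          ⟨hcl x (Finset.mem_of_mem_erase hx) u hu.1 v hv.1 y hy,
           hcl a ha u hu.2 v hv.2 y hy⟩)
        (fun x hx y hy => by
          obtain ⟨m, ⟨hm1, hm2⟩, hm3⟩ := three_helly hT
            (hcl x (Finset.mem_of_mem_erase hx)) (hcl y (Finset.mem_of_mem_erase hy))
            (hcl a ha)
            (hpair x (Finset.mem_of_mem_erase hx) y (Finset.mem_of_mem_erase hy))
            (hpair y (Finset.mem_of_mem_erase hy) a ha)
            (hpair x (Finset.mem_of_mem_erase hx) a ha)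
          exact ⟨m, ⟨hm1, hm3⟩, ⟨hm2, hm3⟩⟩)
      refine ⟨t, fun x hx => ?_⟩
      by_cases hxa : x = a
      · subst hxa; exact (ht b hb).2
      · exact (ht x (Finset.mem_erase.mpr ⟨hxa, hx⟩)).1

end CliqueBags


/-- every clique of `G` is contained in the union of the bags of
two close nodes of any lenient tree decomposition. -/
theorem clique_in_close_bags {V : Type} [Fintype V] (G : SimpleGraph V)
    (D : LenientTD G) (K : Set V) (hK : G.IsClique K) :
    ∃ t t', (t = t' ∨ D.T.Adj t t') ∧ K ⊆ D.χ t ∪ D.χ t' := by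
  classical
  have hT := D.tree
  set f : V → Set D.ι := fun x => {t | x ∈ D.χ t} with hf
  have fne : ∀ x, (f x).Nonempty := fun x => D.covers x
  have fconn : ∀ x, (D.T.induce (f x)).Connected := fun x => D.trace_conn x
  have fcl : ∀ x, CliqueBags.PathClosed hT (f x) :=
    fun x => CliqueBags.pathClosed_of_connected hT (fconn x)
  have close : ∀ x ∈ K, ∀ y ∈ K, x ≠ y →
      (f x ∩ f y).Nonempty ∨ ∃ a ∈ f x, ∃ b ∈ f y, D.T.Adj a b := by
    intro x hx y hy hxy
    obtain ⟨t, t', hc, hxm, hym⟩ := D.edge_mem x y (hK hx hy hxy)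
    rw [Set.mem_union] at hxm hym
    rcases hxm with hxt | hxt <;> rcases hym with hyt | hyt
    · exact Or.inl ⟨t, hxt, hyt⟩
    · rcases hc with rfl | hadj
      · exact Or.inl ⟨t, hxt, hyt⟩
      · exact Or.inr ⟨t, hxt, t', hyt, hadj⟩
    · rcases hc with rfl | hadj
      · exact Or.inl ⟨t, hxt, hyt⟩
      · exact Or.inr ⟨t', hxt, t, hyt, hadj.symm⟩
    · exact Or.inl ⟨t', hxt, hyt⟩
  set Nf : V → Set D.ι := fun x => f x ∪ {y | ∃ s ∈ f x, D.T.Adj s y} with hNf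
  have Nne : ∀ x, (Nf x).Nonempty := fun x => (fne x).mono Set.subset_union_left
  have Ncl : ∀ x, CliqueBags.PathClosed hT (Nf x) := fun x =>
    CliqueBags.pathClosed_of_connected hT (CliqueBags.inflate_connected (fne x) (fconn x))
  have Npair : ∀ x ∈ K, ∀ y ∈ K, (Nf x ∩ Nf y).Nonempty := by
    intro x hx y hy
    by_cases hxy : x = y
    · subst hxy; obtain ⟨t, ht⟩ := fne x; exact ⟨t, Or.inl ht, Or.inl ht⟩
    · rcases close x hx y hy hxy with ⟨w0, h1, h2⟩ | ⟨a, ha, b, hb, hab⟩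
      · exact ⟨w0, Or.inl h1, Or.inl h2⟩
      · exact ⟨a, Or.inl ha, Or.inr ⟨b, hb, hab.symm⟩⟩
  obtain ⟨t0, ht0⟩ := CliqueBags.helly hT ((Set.toFinite K).toFinset.card)
    (Set.toFinite K).toFinset Nf rfl
    (fun x _ => Nne x) (fun x _ => Ncl x)
    (fun x hx y hy =>
      Npair x ((Set.Finite.mem_toFinset _).mp hx) y ((Set.Finite.mem_toFinset _).mp hy))
  have key : ∀ x ∈ K, t0 ∈ Nf x := fun x hx => ht0 x ((Set.Finite.mem_toFinset _).mpr hx)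
  by_cases hall : ∀ x ∈ K, t0 ∈ f x
  · exact ⟨t0, t0, Or.inl rfl, fun x hx => Set.mem_union_left _ (hall x hx)⟩
  · push_neg at hall
    obtain ⟨u, hu, hnu⟩ := hall
    rcases key u hu with h | ⟨s, hs, hst⟩
    · exact absurd h hnu
    refine ⟨t0, s, Or.inr hst.symm, fun x hx => ?_⟩
    by_cases hx0 : t0 ∈ f x
    · exact Set.mem_union_left _ hx0
    rcases key x hx with h | ⟨s', hs', hs't⟩
    · exact absurd h hx0
    have hss : s' = s := by
      by_contra hne'
      obtain ⟨w, hw⟩ : ∃ w : D.T.Walk s s', ∀ z ∈ w.support, z ∈ f u ∪ f x := by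
        by_cases hxu : x = u
        · subst hxu
          exact ⟨CliqueBags.getPath hT s s', fun z hz => Or.inl (fcl x s hs s' hs' z hz)⟩
        · rcases close u hu x hx (fun h => hxu h.symm) with ⟨w0, hw0u, hw0x⟩ | ⟨a, hau, b, hbx, hab⟩
          · refine ⟨(CliqueBags.getPath hT s w0).append (CliqueBags.getPath hT w0 s'), ?_⟩
            intro z hz
            rw [Walk.mem_support_append_iff] at hz
            rcases hz with hz | hz
            · exact Or.inl (fcl u s hs w0 hw0u z hz)
            · exact Or.inr (fcl x w0 hw0x s' hs' z hz)
          · refine ⟨(CliqueBags.getPath hT s a).append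
              (Walk.cons hab (CliqueBags.getPath hT b s')), ?_⟩
            intro z hz
            rw [Walk.mem_support_append_iff] at hz
            rcases hz with hz | hz
            · exact Or.inl (fcl u s hs a hau z hz)
            · rw [Walk.support_cons, List.mem_cons] at hz
              rcases hz with rfl | hz
              · exact Or.inl hau
              · exact Or.inr (fcl x b hbx s' hs' z hz)
      have ht0w : t0 ∉ w.support := by
        intro h
        rcases hw t0 h with h' | h'
        · exact hnu h'
        · exact hx0 h'
      have h1 := CliqueBags.getPath_unique hT w.bypass w.bypass_isPath
      have hst0 : s ≠ t0 := fun h => hnu (h ▸ hs)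
      have hs't0 : s' ≠ t0 := fun h => hx0 (h ▸ hs')
      have hw2 : (Walk.cons hst (Walk.cons hs't.symm (Walk.nil : D.T.Walk s' s'))).IsPath := by
        have hss' : s ≠ s' := fun h => hne' h.symm
        rw [Walk.isPath_def]
        simp [hst0, hs't0, Ne.symm hs't0, hne', hss']
      have h2 := CliqueBags.getPath_unique hT _ hw2
      have hmem : t0 ∈ (CliqueBags.getPath hT s s').support := by
        rw [← h2]; simp
      rw [← h1] at hmem
      exact ht0w (w.support_bypass_subset hmem)
    exact Set.mem_union_right _ (show x ∈ D.χ s from hss ▸ hs')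
end

section
/- Every graph that is minor-minimal with the property sbn(G) > 2 is 2-connected. Equivalently, every graph in the minor-obstruction set of the class of graphs with strict bramble number at most 2 is 2-connected. -/
open SimpleGraph

section Helpers

variable {V : Type}

lemma brOrder_le_of_covers {B : Set (Set V)} {X : Set V} (h : Covers X B) :
    brOrder B ≤ X.ncard := Nat.sInf_le ⟨X, h, rfl⟩

lemma covers_univ {B : Set (Set V)} (h : ∀ S ∈ B, S.Nonempty) :
    Covers (Set.univ : Set V) B := fun S hS => by
  rw [Set.inter_univ]; exact h S hS

lemma brOrder_le_card {B : Set (Set V)} (h : ∀ S ∈ B, S.Nonempty) :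
    brOrder B ≤ Nat.card V := by
  have := brOrder_le_of_covers (covers_univ h)
  rwa [Set.ncard_univ] at this

lemma strictBramble_members_nonempty {G : SimpleGraph V} {B : Set (Set V)}
    (hB : IsStrictBramble G B) : ∀ S ∈ B, S.Nonempty := fun S hS => by
  have := (hB.1 S hS).nonempty
  exact Set.nonempty_coe_sort.mp this

lemma sbn_le_card [Finite V] (G : SimpleGraph V) : sbn G ≤ Nat.card V := by
  apply csSup_le'
  rintro n ⟨B, hB, rfl⟩
  exact brOrder_le_card (strictBramble_members_nonempty hB)

lemma bddAbove_sbn_set [Finite V] (G : SimpleGraph V) :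
    BddAbove {n | ∃ B, IsStrictBramble G B ∧ brOrder B = n} := by
  refine ⟨Nat.card V, ?_⟩
  rintro n ⟨B, hB, rfl⟩
  exact brOrder_le_card (strictBramble_members_nonempty hB)

lemma le_sbn [Finite V] {G : SimpleGraph V} {B : Set (Set V)} (hB : IsStrictBramble G B) :
    brOrder B ≤ sbn G := le_csSup (bddAbove_sbn_set G) ⟨B, hB, rfl⟩

lemma connected_induce_preimage {U S : Set V} (G : SimpleGraph V)
    (h : (G.induce (S ∩ U)).Connected) :
    ((G.induce U).induce (Subtype.val ⁻¹' S)).Connected := by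
  let f : G.induce (S ∩ U) →g (G.induce U).induce (Subtype.val ⁻¹' S) :=
    { toFun := fun x => ⟨⟨x.1, x.2.2⟩, x.2.1⟩,
      map_rel' := fun h => h }
  have hs : Function.Surjective f := fun y => ⟨⟨y.1.1, y.2, y.1.2⟩, rfl⟩
  exact h.map f hs

lemma walk_side {G : SimpleGraph V} {v : V} {A S : Set V}
    (hcl : ∀ x ∈ A, ∀ y, G.Adj x y → y ≠ v → y ∈ A)
    {p q : ↥S} (w : (G.induce S).Walk p q) (hq : q.1 ∈ A ∪ {v}) :
    (∀ hp : p.1 ∈ A ∪ {v},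
      (G.induce (S ∩ (A ∪ {v}))).Reachable ⟨p.1, p.2, hp⟩ ⟨q.1, q.2, hq⟩) ∧
    (p.1 ∉ A ∪ {v} → ∃ hv : v ∈ S,
      (G.induce (S ∩ (A ∪ {v}))).Reachable ⟨v, hv, Or.inr rfl⟩ ⟨q.1, q.2, hq⟩) := by
  induction w with
  | nil => exact ⟨fun hp => Reachable.refl _, fun hp => absurd hq hp⟩
  | @cons p r q h w ih =>
    have hGadj : G.Adj p.1 r.1 := h
    by_cases hr : r.1 ∈ A ∪ {v}
    · constructor
      · intro hp
        have hadj : (G.induce (S ∩ (A ∪ {v}))).Adj ⟨p.1, p.2, hp⟩ ⟨r.1, r.2, hr⟩ := hGadj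
        exact hadj.reachable.trans ((ih hq).1 hr)
      · intro hp
        have hrv : r.1 = v := by
          rcases hr with hrA | hrv
          · exact absurd (Or.inl (hcl r.1 hrA p.1 hGadj.symm (fun hpv => hp (Or.inr hpv)))) hp
          · exact hrv
        refine ⟨hrv ▸ r.2, ?_⟩
        have hre := (ih hq).1 hr
        have heq : (⟨r.1, r.2, hr⟩ : ↥(S ∩ (A ∪ {v}))) = ⟨v, hrv ▸ r.2, Or.inr rfl⟩ :=
          Subtype.ext hrv
        rwa [heq] at hre
    · constructor
      · intro hp
        have hpv : p.1 = v := by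
          rcases hp with hpA | hpv
          · exact absurd (Or.inl (hcl p.1 hpA r.1 hGadj (fun hrv => hr (Or.inr hrv)))) hr
          · exact hpv
        obtain ⟨hv, hreach⟩ := (ih hq).2 hr
        have heq : (⟨p.1, p.2, hp⟩ : ↥(S ∩ (A ∪ {v}))) = ⟨v, hv, Or.inr rfl⟩ :=
          Subtype.ext hpv
        rwa [heq]
      · exact fun _ => (ih hq).2 hr

lemma mem_of_cross {G : SimpleGraph V} {v : V} {A S : Set V}
    (hcl : ∀ x ∈ A, ∀ y, G.Adj x y → y ≠ v → y ∈ A)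
    (hS : (G.induce S).Connected) {x y : V} (hx : x ∈ S) (hxA : x ∈ A)
    (hy : y ∈ S) (hyA : y ∉ A) (hyv : y ≠ v) : v ∈ S := by
  have hreach := hS.preconnected ⟨y, hy⟩ ⟨x, hx⟩
  refine hreach.elim fun w => ?_
  have hq : (⟨x, hx⟩ : ↥S).1 ∈ A ∪ {v} := Or.inl hxA
  have hp : (⟨y, hy⟩ : ↥S).1 ∉ A ∪ {v} := by
    rintro (h | h)
    · exact hyA h
    · exact hyv h
  exact ((walk_side hcl w hq).2 hp).1

lemma connected_trace {G : SimpleGraph V} {v : V} {A S : Set V}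
    (hcl : ∀ x ∈ A, ∀ y, G.Adj x y → y ≠ v → y ∈ A)
    (hS : (G.induce S).Connected) (hSA : (S ∩ A).Nonempty) :
    (G.induce (S ∩ (A ∪ {v}))).Connected := by
  rw [connected_iff]
  obtain ⟨a, haS, haA⟩ := hSA
  constructor
  · rintro ⟨x, hxS, hxU⟩ ⟨y, hyS, hyU⟩
    have hreach := hS.preconnected ⟨x, hxS⟩ ⟨y, hyS⟩
    refine hreach.elim fun w => ?_
    exact (walk_side hcl w hyU).1 hxU
  · exact ⟨⟨a, haS, Or.inl haA⟩⟩

lemma brOrder_le_sbn_induce [Finite V] (G : SimpleGraph V) (U : Set V) (B : Set (Set V))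
    (h1 : ∀ S ∈ B, (S ∩ U).Nonempty)
    (h2 : ∀ S ∈ B, (G.induce (S ∩ U)).Connected)
    (h3 : ∀ S ∈ B, ∀ S' ∈ B, (S ∩ S' ∩ U).Nonempty) :
    brOrder B ≤ sbn (G.induce U) := by
  set B' : Set (Set ↥U) := {T | ∃ S ∈ B, T = Subtype.val ⁻¹' S} with hB'def
  have hB' : IsStrictBramble (G.induce U) B' := by
    constructor
    · rintro T ⟨S, hS, rfl⟩
      exact connected_induce_preimage G (h2 S hS)
    · rintro T ⟨S, hS, rfl⟩ T' ⟨S', hS', rfl⟩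
      obtain ⟨p, hp⟩ := h3 S hS S' hS'
      exact ⟨⟨p, hp.2⟩, hp.1.1, hp.1.2⟩
  have hne : {n | ∃ X : Set ↥U, Covers X B' ∧ X.ncard = n}.Nonempty := by
    refine ⟨(Set.univ : Set ↥U).ncard, Set.univ, ?_, rfl⟩
    rintro T ⟨S, hS, rfl⟩
    obtain ⟨p, hp⟩ := h1 S hS
    exact ⟨⟨p, hp.2⟩, by simp [hp.1]⟩
  obtain ⟨X, hX, hXcard⟩ := Nat.sInf_mem hne
  have hcov : Covers (Subtype.val '' X) B := by
    intro S hS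
    obtain ⟨u, huS, huX⟩ := hX (Subtype.val ⁻¹' S) ⟨S, hS, rfl⟩
    exact ⟨u.1, huS, ⟨u, huX, rfl⟩⟩
  calc brOrder B ≤ (Subtype.val '' X).ncard := brOrder_le_of_covers hcov
    _ = X.ncard := Set.ncard_image_of_injective X Subtype.val_injective
    _ = brOrder B' := hXcard
    _ ≤ sbn (G.induce U) := le_sbn hB'

lemma isMinorOf_induce (G : SimpleGraph V) (U : Set V) : IsMinorOf (G.induce U) G := by
  refine ⟨fun w => {w.1}, ?_, ?_, ?_⟩
  · intro w
    rw [connected_iff]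
    refine ⟨?_, ⟨⟨w.1, rfl⟩⟩⟩
    rintro ⟨x, hx⟩ ⟨y, hy⟩
    have hxy : x = y := hx.trans hy.symm
    subst hxy
    rfl
  · intro w w' hne
    have hval : w.1 ≠ w'.1 := fun h => hne (Subtype.ext h)
    simp [Set.singleton_inter_eq_empty, hval.symm]
  · intro w w' hadj
    exact ⟨w.1, rfl, w'.1, rfl, hadj⟩

lemma side_bound [Fintype V] (G : SimpleGraph V)
    (h2 : ∀ (W : Type) [Fintype W] (H : SimpleGraph W),
      IsMinorOf H G → 2 < sbn H → Nonempty (H ≃g G))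
    {v : V} {A : Set V}
    (hcl : ∀ x ∈ A, ∀ y, G.Adj x y → y ≠ v → y ∈ A)
    {b : V} (hbA : b ∉ A) (hbv : b ≠ v)
    {B : Set (Set V)} (hB : IsStrictBramble G B)
    {S₀ : Set V} (hS₀ : S₀ ∈ B) (hsub : S₀ ⊆ A) :
    brOrder B ≤ 2 := by
  set U := A ∪ {v} with hUdef
  have hbU : b ∉ U := by
    rintro (h | h)
    · exact hbA h
    · exact hbv h
  have hGU : sbn (G.induce U) ≤ 2 := by
    by_contra hgt
    push_neg at hgt
    haveI : Fintype ↥U := Fintype.ofFinite _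
    obtain ⟨e⟩ := h2 ↥U (G.induce U) (isMinorOf_induce G U) hgt
    have hcards : Nat.card ↥U = Nat.card V := Nat.card_congr e.toEquiv
    rw [Nat.card_coe_set_eq] at hcards
    have hlt : U.ncard < (Set.univ : Set V).ncard := by
      refine Set.ncard_lt_ncard ?_ Set.finite_univ
      exact Set.ssubset_univ_iff.mpr (fun h => hbU (h ▸ Set.mem_univ b))
    rw [Set.ncard_univ] at hlt
    omega
  refine le_trans ?_ hGU
  have key : ∀ S ∈ B, (S ∩ A).Nonempty := fun S hS => by
    obtain ⟨p, hp⟩ := hB.2 S hS S₀ hS₀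
    exact ⟨p, hp.1, hsub hp.2⟩
  have hvin : ∀ S ∈ B, ∀ p ∈ S, p ∉ U → v ∈ S := fun S hS p hpS hpU => by
    obtain ⟨x, hxS, hxA⟩ := key S hS
    exact mem_of_cross hcl (hB.1 S hS) hxS hxA hpS
      (fun h => hpU (Or.inl h)) (fun h => hpU (Or.inr h))
  apply brOrder_le_sbn_induce G U B
  · intro S hS
    obtain ⟨x, hx⟩ := key S hS
    exact ⟨x, hx.1, Or.inl hx.2⟩
  · intro S hS
    exact connected_trace hcl (hB.1 S hS) (key S hS)
  · intro S hS S' hS'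
    obtain ⟨p, hpS, hpS'⟩ := hB.2 S hS S' hS'
    by_cases hpU : p ∈ U
    · exact ⟨p, ⟨hpS, hpS'⟩, hpU⟩
    · exact ⟨v, ⟨hvin S hS p hpS hpU, hvin S' hS' p hpS' hpU⟩, Or.inr rfl⟩

end Helpers

/-- every minor-minimal graph with `sbn > 2` is 2-connected:
it has at least three vertices and stays connected after deleting any vertex. -/
theorem obstruction_sbn_two_isTwoConnected {V : Type} [Fintype V]
    (G : SimpleGraph V) (h1 : 2 < sbn G)
    (h2 : ∀ (W : Type) [Fintype W] (H : SimpleGraph W),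
      IsMinorOf H G → 2 < sbn H → Nonempty (H ≃g G)) :
    3 ≤ Fintype.card V ∧ ∀ v : V, (G.induce ({v}ᶜ : Set V)).Connected := by
  have hcardV : 3 ≤ Fintype.card V := by
    by_contra hlt
    push_neg at hlt
    have hle := sbn_le_card G
    rw [Nat.card_eq_fintype_card] at hle
    omega
  refine ⟨hcardV, ?_⟩
  intro v
  by_contra hconn
  obtain ⟨u, huv⟩ := Fintype.exists_ne_of_one_lt_card (by omega) v
  have hnev : Nonempty ↥({v}ᶜ : Set V) := ⟨⟨u, Set.mem_compl_singleton_iff.mpr huv⟩⟩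
  rw [connected_iff] at hconn
  push_neg at hconn
  have hnpre : ¬ (G.induce ({v}ᶜ : Set V)).Preconnected := fun h => not_isEmpty_iff.mpr hnev (hconn h)
  rw [SimpleGraph.Preconnected] at hnpre
  push_neg at hnpre
  obtain ⟨a, b, hab⟩ := hnpre
  set A : Set V := {x : V | ∃ h : x ∈ ({v}ᶜ : Set V),
    (G.induce ({v}ᶜ : Set V)).Reachable a ⟨x, h⟩} with hAdef
  have hclA : ∀ x ∈ A, ∀ y, G.Adj x y → y ≠ v → y ∈ A := by
    rintro x ⟨hx, hr⟩ y hadj hyv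
    have hy : y ∈ ({v}ᶜ : Set V) := Set.mem_compl_singleton_iff.mpr hyv
    have hadj' : (G.induce ({v}ᶜ : Set V)).Adj ⟨x, hx⟩ ⟨y, hy⟩ := hadj
    exact ⟨hy, hr.trans hadj'.reachable⟩
  have haA : a.1 ∈ A := by
    refine ⟨a.2, ?_⟩
    have : (⟨a.1, a.2⟩ : ↥({v}ᶜ : Set V)) = a := Subtype.coe_eta a a.2
    rw [this]
  have hbA : b.1 ∉ A := by
    rintro ⟨h, hr⟩
    apply hab
    have : (⟨b.1, h⟩ : ↥({v}ᶜ : Set V)) = b := Subtype.coe_eta b h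
    rwa [this] at hr
  have hav : a.1 ≠ v := Set.mem_compl_singleton_iff.mp a.2
  have hbv : b.1 ≠ v := Set.mem_compl_singleton_iff.mp b.2
  set Bs : Set V := {x : V | x ≠ v ∧ x ∉ A} with hBdef
  have hclB : ∀ x ∈ Bs, ∀ y, G.Adj x y → y ≠ v → y ∈ Bs := by
    rintro x ⟨hxv, hxA⟩ y hadj hyv
    exact ⟨hyv, fun hyA => hxA (hclA y hyA x hadj.symm hxv)⟩
  have haB : a.1 ∉ Bs := fun h => h.2 haA
  have hbB : b.1 ∈ Bs := ⟨hbv, hbA⟩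
  have hsbn2 : sbn G ≤ 2 := by
    apply csSup_le'
    rintro n ⟨𝓑, h𝓑, rfl⟩
    by_cases hv : ∃ S₀ ∈ 𝓑, v ∉ S₀
    · obtain ⟨S₀, hS₀, hvS₀⟩ := hv
      by_cases hS0A : (S₀ ∩ A).Nonempty
      · have hsub : S₀ ⊆ A := by
          intro y hy
          by_contra hyA
          obtain ⟨x, hxS, hxA⟩ := hS0A
          exact hvS₀ (mem_of_cross hclA (h𝓑.1 S₀ hS₀) hxS hxA hy hyA
            (fun h => hvS₀ (h ▸ hy)))
        exact side_bound G h2 hclA hbA hbv h𝓑 hS₀ hsub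
      · have hsub : S₀ ⊆ Bs := by
          intro y hy
          exact ⟨fun h => hvS₀ (h ▸ hy), fun hyA => hS0A ⟨y, hy, hyA⟩⟩
        exact side_bound G h2 hclB haB hav h𝓑 hS₀ hsub
    · push_neg at hv
      have hcov : Covers ({v} : Set V) 𝓑 := fun S hS => ⟨v, hv S hS, rfl⟩
      have := brOrder_le_of_covers hcov
      rw [Set.ncard_singleton] at this
      omega
  omega
end
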